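/- Let m, n be positive integers and let φ : (ℤ/mℤ)ⁿ → A be a surjective homomorphism onto a finite abelian group A. Then there exist a matrix g ∈ GL_n(ℤ) and positive integers d₁ ∣ d₂ ∣ ⋯ ∣ d_n with each d_i ∣ m, together with an isomorphism A ≅ ℤ/(m/d₁)ℤ ⊕ ⋯ ⊕ ℤ/(m/d_n)ℤ, such that φ composed with the automorphism of (ℤ/mℤ)ⁿ induced by g becomes the componentwise reduction map (x₁,…,x_n) ↦ (x₁ mod m/d₁, …, x_n mod m/d_n). -/

import Mathlib

/-- If two surjective homomorphisms have the same kernel, there is an isomorphism of the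
targets intertwining them. -/
lemma exists_addEquiv_of_surjective {G A B : Type*} [AddCommGroup G] [AddCommGroup A]
    [AddCommGroup B] (p : G →+ A) (q : G →+ B) (hp : Function.Surjective p)
    (hq : Function.Surjective q) (hker : ∀ g, p g = 0 ↔ q g = 0) :
    ∃ e : A ≃+ B, ∀ g, e (p g) = q g := by
  have key : ∀ g g', p g = p g' → q g = q g' := by
    intro g g' h
    have h0 : p (g - g') = 0 := by rw [map_sub, h, sub_self]
    have := (hker _).mp h0
    rw [map_sub, sub_eq_zero] at this
    exact this
  have key' : ∀ g g', q g = q g' → p g = p g' := by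
    intro g g' h
    have h0 : q (g - g') = 0 := by rw [map_sub, h, sub_self]
    have := (hker _).mpr h0
    rw [map_sub, sub_eq_zero] at this
    exact this
  set s := Function.surjInv hp with hs
  set t := Function.surjInv hq with ht
  have hqs : ∀ g, q (s (p g)) = q g := fun g => key _ _ (Function.surjInv_eq hp (p g))
  have hpt : ∀ g, p (t (q g)) = p g := fun g => key' _ _ (Function.surjInv_eq hq (q g))
  refine ⟨{ toFun := fun a => q (s a), invFun := fun b => p (t b),
            left_inv := ?_, right_inv := ?_, map_add' := ?_ }, fun g => hqs g⟩
  · intro a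
    obtain ⟨g, rfl⟩ := hp a
    show p (t (q (s (p g)))) = p g
    rw [hqs, hpt]
  · intro b
    obtain ⟨g, rfl⟩ := hq b
    show q (s (p (t (q g)))) = q g
    rw [hpt, hqs]
  · intro a b
    obtain ⟨g, rfl⟩ := hp a
    obtain ⟨g', rfl⟩ := hp b
    show q (s (p g + p g')) = q (s (p g)) + q (s (p g'))
    rw [← map_add p, hqs (g + g'), hqs g, hqs g', map_add]

/-- `Reduces c c'`: there is a linear automorphism of `ℤⁿ` transforming the lattice of
vectors divisible coordinatewise by `c` into that for `c'`. -/
def Reduces {n : ℕ} (c c' : Fin n → ℕ) : Prop :=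
  ∃ F : (Fin n → ℤ) ≃ₗ[ℤ] (Fin n → ℤ),
    ∀ y : Fin n → ℤ, (∀ i, (c i : ℤ) ∣ F y i) ↔ (∀ i, (c' i : ℤ) ∣ y i)

lemma Reduces.refl {n : ℕ} (c : Fin n → ℕ) : Reduces c c :=
  ⟨LinearEquiv.refl ℤ _, fun _ => Iff.rfl⟩

lemma Reduces.trans {n : ℕ} {c c' c'' : Fin n → ℕ} (h1 : Reduces c c') (h2 : Reduces c' c'') :
    Reduces c c'' := by
  obtain ⟨F1, hF1⟩ := h1
  obtain ⟨F2, hF2⟩ := h2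
  exact ⟨F2.trans F1, fun y => (hF1 _).trans (hF2 y)⟩


section prims
variable {n : ℕ}

/-- Extend a linear endomorphism of `ℤⁿ` to `ℤⁿ⁺¹` acting as identity on coordinate 0. -/
noncomputable def extendOne (f : (Fin n → ℤ) →ₗ[ℤ] (Fin n → ℤ)) :
    (Fin (n + 1) → ℤ) →ₗ[ℤ] (Fin (n + 1) → ℤ) :=
  LinearMap.pi (Fin.cons (LinearMap.proj 0)
    (fun i => LinearMap.proj i ∘ₗ f ∘ₗ LinearMap.funLeft ℤ ℤ Fin.succ))

lemma extendOne_apply (f : (Fin n → ℤ) →ₗ[ℤ] (Fin n → ℤ)) (y : Fin (n + 1) → ℤ) :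
    extendOne f y = Fin.cons (y 0) (f (Fin.tail y)) := by
  funext i
  refine Fin.cases ?_ (fun j => ?_) i
  · simp [extendOne, LinearMap.pi_apply]
  · simp only [extendOne, LinearMap.pi_apply, Fin.cons_succ, LinearMap.comp_apply,
      LinearMap.proj_apply]
    rfl

/-- The linear equivalence extending `F` by identity on coordinate 0. -/
noncomputable def extendOneEquiv (F : (Fin n → ℤ) ≃ₗ[ℤ] (Fin n → ℤ)) :
    (Fin (n + 1) → ℤ) ≃ₗ[ℤ] (Fin (n + 1) → ℤ) := by
  refine LinearEquiv.ofLinear (extendOne F.toLinearMap) (extendOne F.symm.toLinearMap) ?_ ?_ <;>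
  · apply LinearMap.ext
    intro y
    simp only [LinearMap.comp_apply, extendOne_apply, Fin.cons_zero, Fin.tail_cons,
      LinearMap.id_apply, LinearEquiv.coe_coe]
    first
    | rw [LinearEquiv.apply_symm_apply, Fin.cons_self_tail]
    | rw [LinearEquiv.symm_apply_apply, Fin.cons_self_tail]

end prims


section prims
variable {n : ℕ}

/-- The linear endomorphism of `ℤⁿ⁺²` given by a 2×2 integer matrix on the first two
coordinates and identity elsewhere. -/
noncomputable def front2 (p q r s : ℤ) :
    (Fin (n + 2) → ℤ) →ₗ[ℤ] (Fin (n + 2) → ℤ) :=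
  LinearMap.pi (Fin.cons (p • LinearMap.proj 0 + q • LinearMap.proj 1)
    (Fin.cons (r • LinearMap.proj 0 + s • LinearMap.proj 1)
      (fun i => LinearMap.proj i.succ.succ)))

lemma front2_apply (p q r s : ℤ) (y : Fin (n + 2) → ℤ) :
    front2 p q r s y =
      Fin.cons (p * y 0 + q * y 1) (Fin.cons (r * y 0 + s * y 1) (fun i => y i.succ.succ)) := by
  funext i
  refine Fin.cases ?_ (fun j => ?_) i
  · simp [front2, LinearMap.pi_apply, smul_eq_mul]
  · refine Fin.cases ?_ (fun k => ?_) j <;>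
      simp [front2, LinearMap.pi_apply, smul_eq_mul]

/-- If `p * s' ... ` the explicit inverse works, we get an equivalence. -/
noncomputable def front2Equiv (p q r s p' q' r' s' : ℤ)
    (h11 : p * p' + q * r' = 1) (h12 : p * q' + q * s' = 0)
    (h21 : r * p' + s * r' = 0) (h22 : r * q' + s * s' = 1)
    (h11' : p' * p + q' * r = 1) (h12' : p' * q + q' * s = 0)
    (h21' : r' * p + s' * r = 0) (h22' : r' * q + s' * s = 1) :
    (Fin (n + 2) → ℤ) ≃ₗ[ℤ] (Fin (n + 2) → ℤ) := by
  refine LinearEquiv.ofLinear (front2 p q r s) (front2 p' q' r' s') ?_ ?_ <;>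
  · apply LinearMap.ext
    intro y
    funext i
    simp only [LinearMap.comp_apply, front2_apply, LinearMap.id_apply,
      show (1 : Fin (n + 2)) = Fin.succ 0 from rfl, Fin.cons_succ, Fin.cons_zero]
    refine Fin.cases ?_ (fun j => ?_) i
    · simp only [Fin.cons_zero]
      simp only [show (Fin.succ (0 : Fin (n + 1))) = (1 : Fin (n + 2)) from rfl]
      first
      | linear_combination y 0 * h11 + y 1 * h12
      | linear_combination y 0 * h11' + y 1 * h12'
    · refine Fin.cases ?_ (fun k => ?_) j
      · simp only [Fin.cons_succ, Fin.cons_zero]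
        simp only [show (Fin.succ (0 : Fin (n + 1))) = (1 : Fin (n + 2)) from rfl]
        first
        | linear_combination y 0 * h21 + y 1 * h22
        | linear_combination y 0 * h21' + y 1 * h22'
      · simp [Fin.cons_succ]

end prims


section two
variable (a b : ℕ)

lemma two_by_two_data (ha : 0 < a) (hb : 0 < b) :
    ∃ u v a' b' : ℤ, (a : ℤ) = a.gcd b * a' ∧ (b : ℤ) = a.gcd b * b' ∧
      u * a' + v * b' = 1 ∧ (a.lcm b : ℤ) = a * b' ∧ (a.lcm b : ℤ) = a' * b := by
  set d : ℕ := a.gcd b with hd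
  have hd0 : 0 < d := Nat.gcd_pos_of_pos_left _ ha
  have hdz : ((d : ℤ)) ≠ 0 := by exact_mod_cast hd0.ne'
  obtain ⟨a', ha'⟩ : ((d : ℤ)) ∣ (a : ℤ) := Int.natCast_dvd_natCast.mpr (Nat.gcd_dvd_left a b)
  obtain ⟨b', hb'⟩ : ((d : ℤ)) ∣ (b : ℤ) := Int.natCast_dvd_natCast.mpr (Nat.gcd_dvd_right a b)
  have hbez : (d : ℤ) = a * Int.gcdA a b + b * Int.gcdB a b := by
    have := Int.gcd_eq_gcd_ab (a : ℤ) (b : ℤ)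
    rwa [Int.gcd_natCast_natCast] at this
  have hml : (d : ℤ) * (a.lcm b : ℤ) = (a : ℤ) * b := by exact_mod_cast Nat.gcd_mul_lcm a b
  refine ⟨Int.gcdA a b, Int.gcdB a b, a', b', ha', hb', ?_, ?_, ?_⟩
  · apply mul_left_cancel₀ hdz
    linear_combination (-(Int.gcdA a b)) * ha' - Int.gcdB a b * hb' - hbez
  · apply mul_left_cancel₀ hdz
    linear_combination hml + (a : ℤ) * hb'
  · apply mul_left_cancel₀ hdz
    linear_combination hml + (b : ℤ) * ha'
end two

section redprims
variable {n : ℕ}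

lemma reduces_cons {c'' : Fin n → ℕ} {c : Fin (n + 1) → ℕ} (h : Reduces (Fin.tail c) c'') :
    Reduces c (Fin.cons (c 0) c'') := by
  obtain ⟨F, hF⟩ := h
  refine ⟨extendOneEquiv F, fun y => ?_⟩
  have happ : (extendOneEquiv F) y = Fin.cons (y 0) (F (Fin.tail y)) := by
    show extendOne F.toLinearMap y = _
    exact extendOne_apply _ y
  rw [happ, Fin.forall_fin_succ, Fin.forall_fin_succ]
  simp only [Fin.cons_zero, Fin.cons_succ]
  constructor
  · rintro ⟨h0, hs⟩
    exact ⟨h0, (hF (Fin.tail y)).mp (fun i => hs i)⟩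
  · rintro ⟨h0, hs⟩
    exact ⟨h0, fun i => (hF (Fin.tail y)).mpr (fun i => hs i) i⟩

lemma reduces_front2 (a b : ℕ) (ha : 0 < a) (hb : 0 < b) (t : Fin n → ℕ) :
    Reduces (Fin.cons a (Fin.cons b t)) (Fin.cons (a.lcm b) (Fin.cons (a.gcd b) t)) := by
  obtain ⟨u, v, a', b', ha', hb', hB, hla, hlb⟩ := two_by_two_data a b ha hb
  have hda : ((a.gcd b : ℕ) : ℤ) ∣ (a : ℤ) := Int.natCast_dvd_natCast.mpr (Nat.gcd_dvd_left a b)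
  have hdb : ((a.gcd b : ℕ) : ℤ) ∣ (b : ℤ) := Int.natCast_dvd_natCast.mpr (Nat.gcd_dvd_right a b)
  refine ⟨front2Equiv (-v) a' u b' (-b') a' u v
    (by linear_combination hB) (by ring) (by ring) (by linear_combination hB)
    (by linear_combination hB) (by ring) (by ring) (by linear_combination hB), fun y => ?_⟩
  have happ : ∀ z : Fin (n + 2) → ℤ, (front2Equiv (n := n) (-v) a' u b' (-b') a' u v
      (by linear_combination hB) (by ring) (by ring) (by linear_combination hB)
      (by linear_combination hB) (by ring) (by ring) (by linear_combination hB)) z =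
      Fin.cons (-v * z 0 + a' * z 1) (Fin.cons (u * z 0 + b' * z 1)
        (fun i => z i.succ.succ)) := fun z => front2_apply _ _ _ _ z
  rw [happ]
  rw [Fin.forall_fin_succ, Fin.forall_fin_succ, Fin.forall_fin_succ, Fin.forall_fin_succ]
  simp only [Fin.cons_zero, Fin.cons_succ]
  simp only [show (Fin.succ (0 : Fin (n + 1))) = (1 : Fin (n + 2)) from rfl]
  constructor
  · rintro ⟨h1, h2, h3⟩
    obtain ⟨w1, hw1⟩ := h1
    obtain ⟨w2, hw2⟩ := h2
    refine ⟨⟨w2 - w1, ?_⟩, ⟨u * a' * w1 + v * b' * w2, ?_⟩, h3⟩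
    · linear_combination (-b') * hw1 + a' * hw2 + (-(y 0)) * hB + w1 * hla + (-w2) * hlb
    · linear_combination u * hw1 + v * hw2 + (-(y 1)) * hB + (u * w1) * ha' + (v * w2) * hb'
  · rintro ⟨g1, g2, h3⟩
    obtain ⟨s0, hs0⟩ := g1
    obtain ⟨t1, ht1⟩ := g2
    refine ⟨⟨-(v * b' * s0) + t1, ?_⟩, ⟨u * a' * s0 + t1, ?_⟩, h3⟩
    · linear_combination (-v) * hs0 + a' * ht1 + (-(v * s0)) * hla + (-t1) * ha'
    · linear_combination u * hs0 + b' * ht1 + (u * s0) * hlb + (-t1) * hb'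

end redprims
section induct

lemma lemB : ∀ (n : ℕ) (M : ℕ) (c : Fin (n + 1) → ℕ), (∀ i, 0 < c i) → (∀ i, c i ∣ M) →
    ∃ c' : Fin (n + 1) → ℕ, Reduces c c' ∧ (∀ i, 0 < c' i) ∧ (∀ i, c' i ∣ M) ∧
      (∀ i, c i ∣ c' 0) ∧ (∀ i, c' i ∣ c' 0) := by
  intro n
  induction n with
  | zero =>
    intro M c hpos hdvd
    refine ⟨c, Reduces.refl c, hpos, hdvd, fun i => ?_, fun i => ?_⟩ <;>
      · rw [Fin.fin_one_eq_zero i]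
  | succ n IH =>
    intro M c hpos hdvd
    obtain ⟨ch, hredh, hposh, hdvdh, hdh, hdh'⟩ :=
      IH M (Fin.tail c) (fun i => hpos i.succ) (fun i => hdvd i.succ)
    have h1 : Reduces c (Fin.cons (c 0) ch) := reduces_cons hredh
    have h2 : Reduces (Fin.cons (c 0) (Fin.cons (ch 0) (Fin.tail ch)))
        (Fin.cons ((c 0).lcm (ch 0)) (Fin.cons ((c 0).gcd (ch 0)) (Fin.tail ch))) :=
      reduces_front2 (c 0) (ch 0) (hpos 0) (hposh 0) (Fin.tail ch)
    rw [Fin.cons_self_tail ch] at h2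
    refine ⟨Fin.cons ((c 0).lcm (ch 0)) (Fin.cons ((c 0).gcd (ch 0)) (Fin.tail ch)),
      h1.trans h2, ?_, ?_, ?_, ?_⟩
    · intro i
      refine Fin.cases ?_ (fun j => Fin.cases ?_ (fun k => ?_) j) i
      · simp only [Fin.cons_zero]
        exact Nat.pos_of_ne_zero (Nat.lcm_ne_zero (hpos 0).ne' (hposh 0).ne')
      · simp only [Fin.cons_succ, Fin.cons_zero]
        exact Nat.gcd_pos_of_pos_left _ (hpos 0)
      · simp only [Fin.cons_succ]
        exact hposh k.succ
    · intro i
      refine Fin.cases ?_ (fun j => Fin.cases ?_ (fun k => ?_) j) i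
      · simp only [Fin.cons_zero]
        exact Nat.lcm_dvd (hdvd 0) (hdvdh 0)
      · simp only [Fin.cons_succ, Fin.cons_zero]
        exact (Nat.gcd_dvd_left _ _).trans (hdvd 0)
      · simp only [Fin.cons_succ]
        exact hdvdh k.succ
    · intro i
      simp only [Fin.cons_zero]
      refine Fin.cases ?_ (fun j => ?_) i
      · exact Nat.dvd_lcm_left _ _
      · exact (hdh j).trans (Nat.dvd_lcm_right _ _)
    · intro i
      simp only [Fin.cons_zero]
      refine Fin.cases ?_ (fun j => Fin.cases ?_ (fun k => ?_) j) i
      · simp only [Fin.cons_zero]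
        exact dvd_rfl
      · simp only [Fin.cons_succ, Fin.cons_zero]
        exact (Nat.gcd_dvd_left _ _).trans (Nat.dvd_lcm_left _ _)
      · simp only [Fin.cons_succ]
        exact (hdh' k.succ).trans (Nat.dvd_lcm_right _ _)

lemma lemA : ∀ (n : ℕ) (M : ℕ) (c : Fin n → ℕ), (∀ i, 0 < c i) → (∀ i, c i ∣ M) →
    ∃ c' : Fin n → ℕ, Reduces c c' ∧ (∀ i, 0 < c' i) ∧ (∀ i, c' i ∣ M) ∧
      (∀ i j : Fin n, i ≤ j → c' j ∣ c' i) := by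
  intro n
  induction n with
  | zero =>
    intro M c hpos hdvd
    exact ⟨c, Reduces.refl c, hpos, hdvd, fun i => i.elim0⟩
  | succ n IH =>
    intro M c hpos hdvd
    obtain ⟨c1, hred1, hpos1, hdvd1, _, hall1⟩ := lemB n M c hpos hdvd
    obtain ⟨ch, hredh, hposh, hdvdh, hchainh⟩ :=
      IH (c1 0) (Fin.tail c1) (fun i => hpos1 i.succ) (fun i => hall1 i.succ)
    refine ⟨Fin.cons (c1 0) ch, hred1.trans (reduces_cons hredh), ?_, ?_, ?_⟩
    · intro i
      refine Fin.cases ?_ (fun j => ?_) i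
      · simpa using hpos1 0
      · simpa using hposh j
    · intro i
      refine Fin.cases ?_ (fun j => ?_) i
      · simpa using hdvd1 0
      · simpa using (hdvdh j).trans (hdvd1 0)
    · intro i j hij
      obtain rfl | ⟨i', rfl⟩ := Fin.eq_zero_or_eq_succ i
      · obtain rfl | ⟨j', rfl⟩ := Fin.eq_zero_or_eq_succ j
        · exact dvd_rfl
        · simp only [Fin.cons_succ, Fin.cons_zero]
          exact hdvdh j'
      · obtain rfl | ⟨j', rfl⟩ := Fin.eq_zero_or_eq_succ j
        · exact absurd hij (by simp [Fin.le_def])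
        · simp only [Fin.cons_succ]
          exact hchainh i' j' (by rwa [Fin.succ_le_succ_iff] at hij)

end induct
theorem surjection_from_zmod_pow_normal_form
    (m n : ℕ) (hm : 0 < m) (hn : 0 < n)
    (A : Type*) [AddCommGroup A] [Fintype A]
    (φ : (Fin n → ZMod m) →+ A) (hφ : Function.Surjective ⇑φ) :
    ∃ (g : Matrix.GeneralLinearGroup (Fin n) ℤ) (d : Fin n → ℕ),
      (∀ i, 0 < d i) ∧ (∀ i j : Fin n, i ≤ j → d i ∣ d j) ∧
      ∃ (hdm : ∀ i, d i ∣ m) (e : A ≃+ ((i : Fin n) → ZMod (m / d i))),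
        ∀ (x : Fin n → ZMod m) (i : Fin n),
          e (φ (((g : Matrix (Fin n) (Fin n) ℤ).map
              (Int.cast : ℤ → ZMod m)).mulVec x)) i
            = ZMod.castHom (Nat.div_dvd_of_dvd (hdm i)) (ZMod (m / d i)) (x i) := by

  classical
  -- the integral reduction map
  let π : (Fin n → ℤ) →+ (Fin n → ZMod m) :=
    AddMonoidHom.mk' (fun y i => ((y i : ℤ) : ZMod m))
      (by intro x y; funext i; push_cast; simp [Pi.add_apply])
  have hπ : Function.Surjective π := by
    intro x
    refine ⟨fun i => (ZMod.intCast_surjective (x i)).choose, funext fun i => ?_⟩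
    exact (ZMod.intCast_surjective (x i)).choose_spec
  set ψ : (Fin n → ℤ) →+ A := φ.comp π with hψdef
  have hψ : Function.Surjective ψ := hφ.comp hπ
  have hmA : ∀ v : Fin n → ℤ, ψ ((m : ℤ) • v) = 0 := by
    intro v
    have : π ((m : ℤ) • v) = 0 := by
      funext i
      show (((m : ℤ) * v i : ℤ) : ZMod m) = 0
      push_cast
      simp [ZMod.natCast_self]
    show φ (π ((m : ℤ) • v)) = 0
    rw [this, map_zero]
  set K := LinearMap.ker ψ.toIntLinearMap with hKdef
  have hmK : ∀ v : Fin n → ℤ, (m : ℤ) • v ∈ K := fun v => by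
    exact LinearMap.mem_ker.mpr (hmA v)
  obtain ⟨k, snf⟩ := Submodule.smithNormalForm (Pi.basisFun ℤ (Fin n)) K
  -- the embedding is surjective: K has full rank
  have hfsurj : Function.Surjective snf.f := by
    intro j
    by_contra hj
    have hj' : j ∉ Set.range ⇑snf.f := by simpa using hj
    have hle := snf.le_ker_coord_of_notMem_range hj'
    have hmem := hle (hmK (snf.bM j))
    rw [LinearMap.mem_ker, Module.Basis.coord_apply, map_smul, Module.Basis.repr_self] at hmem
    simp only [Finsupp.smul_apply, Finsupp.single_eq_same, smul_eq_mul, mul_one] at hmem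
    exact_mod_cast absurd hmem (by exact_mod_cast hm.ne')
  have hfbij : Function.Bijective snf.f := ⟨snf.f.injective, hfsurj⟩
  set σ : Fin k ≃ Fin n := Equiv.ofBijective snf.f hfbij with hσdef
  have hσ : ∀ i, σ i = snf.f i := fun i => rfl
  have ha0 : ∀ i, snf.a i ≠ 0 := by
    intro i h
    have hbN := snf.snf i
    rw [h, zero_smul] at hbN
    exact Module.Basis.ne_zero snf.bN i (by exact_mod_cast Subtype.ext hbN)
  set c : Fin n → ℕ := fun j => (snf.a (σ.symm j)).natAbs with hcdef
  -- membership in K via divisibility of coordinates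
  have hKmem : ∀ x, x ∈ K ↔ ∀ j, (c j : ℤ) ∣ snf.bM.repr x j := by
    intro x
    constructor
    · intro hx j
      have h1 := snf.repr_apply_embedding_eq_repr_smul (m := ⟨x, hx⟩) (i := σ.symm j)
      rw [show snf.f (σ.symm j) = σ (σ.symm j) from rfl, Equiv.apply_symm_apply] at h1
      rw [Int.natAbs_dvd]
      exact ⟨snf.bN.repr ⟨x, hx⟩ (σ.symm j), by
        rw [h1, map_smul, Finsupp.smul_apply, smul_eq_mul]⟩
    · intro hx
      have hall : ∀ j, ∃ w : ℤ, snf.bM.repr x j = snf.a (σ.symm j) * w := by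
        intro j
        obtain ⟨w, hw⟩ := Int.natAbs_dvd.mp (hx j)
        exact ⟨w, hw⟩
      choose w hw using hall
      have hxsum : x = ∑ j, (snf.bM.repr x j) • snf.bM j := (snf.bM.sum_repr x).symm
      rw [hxsum]
      refine Submodule.sum_mem K fun j _ => ?_
      rw [hw j, mul_comm, mul_smul]
      refine Submodule.smul_mem K _ ?_
      have hsnf := snf.snf (σ.symm j)
      rw [show snf.f (σ.symm j) = j from Equiv.apply_symm_apply σ j] at hsnf
      rw [← hsnf]
      exact SetLike.coe_mem _
  -- change of basis
  set F0 : (Fin n → ℤ) ≃ₗ[ℤ] (Fin n → ℤ) := snf.bM.equivFun.symm with hF0def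
  have hreprF0 : ∀ (v : Fin n → ℤ) (j : Fin n), snf.bM.repr (F0 v) j = v j := by
    intro v j
    have : snf.bM.equivFun (snf.bM.equivFun.symm v) = v := snf.bM.equivFun.apply_symm_apply v
    calc snf.bM.repr (F0 v) j = snf.bM.equivFun (snf.bM.equivFun.symm v) j := rfl
    _ = v j := by rw [this]
  have hF0 : ∀ v, ψ (F0 v) = 0 ↔ ∀ j, (c j : ℤ) ∣ v j := by
    intro v
    have h1 : ψ (F0 v) = 0 ↔ F0 v ∈ K := Iff.rfl
    rw [h1, hKmem]
    exact forall_congr' fun j => by rw [hreprF0]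
  have hcpos : ∀ j, 0 < c j := fun j => Int.natAbs_pos.mpr (ha0 _)
  have hcdvd : ∀ j, c j ∣ m := by
    intro j
    have hmem := (hKmem _).mp (hmK (snf.bM j))
    have := hmem j
    rw [map_smul, Module.Basis.repr_self, Finsupp.smul_apply, Finsupp.single_eq_same] at this
    simp only [smul_eq_mul, mul_one] at this
    exact_mod_cast this
  -- apply the invariant-factor reduction
  obtain ⟨c', hred, hc'pos, hc'dvd, hchain⟩ := lemA n m c hcpos hcdvd
  -- the divisor function d
  set d : Fin n → ℕ := fun i => m / c' i with hddef
  have hmd : ∀ i, m / d i = c' i := fun i => Nat.div_div_self (hc'dvd i) hm.ne'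
  have hdpos : ∀ i, 0 < d i :=
    fun i => Nat.div_pos (Nat.le_of_dvd hm (hc'dvd i)) (hc'pos i)
  have hddvd : ∀ i, d i ∣ m := fun i => Nat.div_dvd_of_dvd (hc'dvd i)
  have hdchain : ∀ i j : Fin n, i ≤ j → d i ∣ d j := by
    intro i j hij
    obtain ⟨t, ht⟩ := hchain i j hij
    obtain ⟨e, he⟩ := hc'dvd i
    have h1 : d i = e := by rw [hddef]; simp only; rw [he, Nat.mul_div_cancel_left e (hc'pos i)]
    have h2 : d j = t * e := by
      rw [hddef]; simp only
      rw [show m = c' j * (t * e) by rw [he, ht]; ring, Nat.mul_div_cancel_left _ (hc'pos j)]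
    rw [h1, h2]
    exact dvd_mul_left e t
  -- rewrite c' as m / d
  have hc'eq : c' = fun i => m / d i := funext fun i => (hmd i).symm
  rw [hc'eq] at hred hc'pos hchain
  obtain ⟨F1, hF1⟩ := hred
  set F : (Fin n → ℤ) ≃ₗ[ℤ] (Fin n → ℤ) := F1.trans F0 with hFdef
  have hFapp : ∀ y, F y = F0 (F1 y) := fun y => rfl
  -- the two surjections with equal kernels
  set q : (Fin n → ℤ) →+ ((i : Fin n) → ZMod (m / d i)) :=
    AddMonoidHom.mk' (fun y i => ((y i : ℤ) : ZMod (m / d i)))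
      (by intro x y; funext i; push_cast; simp [Pi.add_apply]) with hqdef
  have hq : Function.Surjective q := by
    intro z
    refine ⟨fun i => (ZMod.intCast_surjective (z i)).choose, funext fun i => ?_⟩
    exact (ZMod.intCast_surjective (z i)).choose_spec
  set p : (Fin n → ℤ) →+ A := ψ.comp F.toLinearMap.toAddMonoidHom with hpdef
  have hp : Function.Surjective p := hψ.comp F.surjective
  have hker : ∀ y, p y = 0 ↔ q y = 0 := by
    intro y
    have h1 : p y = ψ (F0 (F1 y)) := rfl
    rw [h1, hF0, hF1]
    constructor
    · intro h
      funext i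
      exact (ZMod.intCast_zmod_eq_zero_iff_dvd _ _).mpr (h i)
    · intro h i
      exact (ZMod.intCast_zmod_eq_zero_iff_dvd _ _).mp (congrFun h i)
  obtain ⟨e, he⟩ := exists_addEquiv_of_surjective p q hp hq hker
  -- the invertible matrix
  set G : Matrix (Fin n) (Fin n) ℤ := LinearMap.toMatrix' (F : (Fin n → ℤ) →ₗ[ℤ] (Fin n → ℤ))
    with hGdef
  set G' : Matrix (Fin n) (Fin n) ℤ :=
    LinearMap.toMatrix' (F.symm : (Fin n → ℤ) →ₗ[ℤ] (Fin n → ℤ)) with hG'def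
  have hcomp1 : (F : (Fin n → ℤ) →ₗ[ℤ] (Fin n → ℤ)) ∘ₗ (F.symm : _ →ₗ[ℤ] _) = LinearMap.id := by
    rw [LinearEquiv.comp_coe, LinearEquiv.symm_trans_self, LinearEquiv.refl_toLinearMap]
  have hcomp2 : (F.symm : (Fin n → ℤ) →ₗ[ℤ] (Fin n → ℤ)) ∘ₗ (F : _ →ₗ[ℤ] _) = LinearMap.id := by
    rw [LinearEquiv.comp_coe, LinearEquiv.self_trans_symm, LinearEquiv.refl_toLinearMap]
  have hGG' : G * G' = 1 := by
    rw [hGdef, hG'def, ← LinearMap.toMatrix'_comp, hcomp1, LinearMap.toMatrix'_id]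
  have hG'G : G' * G = 1 := by
    rw [hGdef, hG'def, ← LinearMap.toMatrix'_comp, hcomp2, LinearMap.toMatrix'_id]
  have hmulvec : ∀ y : Fin n → ℤ, G.mulVec y = F y := by
    intro y
    rw [hGdef, ← Matrix.toLin'_apply, Matrix.toLin'_toMatrix']
    rfl
  refine ⟨⟨G, G', hGG', hG'G⟩, d, hdpos, hdchain, hddvd, e, ?_⟩
  intro x i
  obtain ⟨y, rfl⟩ := hπ x
  have hmv : (G.map (Int.cast : ℤ → ZMod m)).mulVec (π y) = π (G.mulVec y) := by
    funext j
    show ∑ l, (G j l : ZMod m) * ((y l : ℤ) : ZMod m) = ((∑ l, G j l * y l : ℤ) : ZMod m)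
    push_cast
    rfl
  have hcoe : ((⟨G, G', hGG', hG'G⟩ : Matrix.GeneralLinearGroup (Fin n) ℤ) :
      Matrix (Fin n) (Fin n) ℤ) = G := rfl
  rw [hcoe, hmv, hmulvec]
  have hlhs : φ (π (F y)) = p y := rfl
  rw [hlhs]
  have := congrFun (he y) i
  rw [this]
  show ((y i : ℤ) : ZMod (m / d i)) = ZMod.castHom _ (ZMod (m / d i)) ((y i : ℤ) : ZMod m)
  rw [map_intCast]
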